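/- Suppose T is the complete balanced binary tree of depth n (vertices are binary strings of length ≤ n), and each vertex is labeled by an element of ℤ with all labels ≥ -1, such that for every internal vertex labeled x with children labeled y and z: max(y,z) ≤ x, and if x ≥ 0 then min(y,z) < x. If the root's label is at most k (with k ≥ 0), then the number of leaves with nonnegative label is at most φ(n,k) = ∑_{i=0}^{k} C(n,i). -/

import Mathlib

/-- `phi n k = C(n,0) + C(n,1) + ... + C(n,k)`. -/
def phi (n k : ℕ) : ℕ := ∑ i ∈ Finset.range (k + 1), n.choose i

lemma phi_pos (n k : ℕ) : 1 ≤ phi n k := by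
  calc 1 = n.choose 0 := (Nat.choose_zero_right n).symm
    _ ≤ phi n k := Finset.single_le_sum (f := fun i => n.choose i)
        (fun i _ => Nat.zero_le _) (Finset.mem_range.2 (Nat.succ_pos k))

lemma phi_succ (n k : ℕ) : phi (n + 1) (k + 1) = phi n k + phi n (k + 1) := by
  induction k with
  | zero => simp [phi, Finset.sum_range_succ]; omega
  | succ k ih =>
    have h1 : phi (n+1) (k+1+1) = phi (n+1) (k+1) + (n+1).choose (k+1+1) := by
      simp [phi, Finset.sum_range_succ]
    have h2 : phi n (k+1+1) = phi n (k+1) + n.choose (k+1+1) := by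
      simp [phi, Finset.sum_range_succ]
    have h3 : phi n (k+1) = phi n k + n.choose (k+1) := by
      simp [phi, Finset.sum_range_succ]
    have hp : (n+1).choose (k+1+1) = n.choose (k+1) + n.choose (k+1+1) :=
      Nat.choose_succ_succ n (k+1)
    omega

lemma phi_mono (n k : ℕ) : phi n k ≤ phi (n + 1) k :=
  Finset.sum_le_sum fun i _ => Nat.choose_le_choose i (Nat.le_succ n)

lemma desc (n : ℕ) (lab : List Bool → ℤ)
    (hmax : ∀ u : List Bool, u.length < n →
      max (lab (u ++ [false])) (lab (u ++ [true])) ≤ lab u) :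
    ∀ l : List Bool, l.length ≤ n → lab l ≤ lab [] := by
  intro l
  induction l using List.reverseRecOn with
  | nil => intro _; exact le_refl _
  | append_singleton u b ih =>
    intro h
    have hu : u.length < n := by simp at h; omega
    have hm := hmax u hu
    have hb : lab (u ++ [b]) ≤ lab u := by
      cases b
      · exact le_trans (le_max_left _ _) hm
      · exact le_trans (le_max_right _ _) hm
    exact hb.trans (ih (le_of_lt hu))

lemma aux_bound : ∀ (d : ℕ) (k : ℕ) (lab : List Bool → ℤ),
    (∀ u : List Bool, u.length < d →
      max (lab (u ++ [false])) (lab (u ++ [true])) ≤ lab u) →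
    (∀ u : List Bool, u.length < d → 0 ≤ lab u →
      min (lab (u ++ [false])) (lab (u ++ [true])) < lab u) →
    lab [] ≤ (k : ℤ) →
    Nat.card {v : Fin d → Bool // 0 ≤ lab (List.ofFn v)} ≤ phi d k := by
  intro d
  induction d with
  | zero =>
    intro k lab _ _ _
    have h1 : Nat.card {v : Fin 0 → Bool // 0 ≤ lab (List.ofFn v)} ≤
        Nat.card (Fin 0 → Bool) :=
      Nat.card_le_card_of_injective Subtype.val Subtype.val_injective
    have h2 : Nat.card (Fin 0 → Bool) = 1 := by
      simp [Nat.card_eq_fintype_card]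
    exact le_trans (h1.trans h2.le) (phi_pos 0 k)
  | succ d ih =>
    intro k lab hmax hmin hroot
    -- transfer hypotheses to children
    have hmaxc : ∀ b : Bool, ∀ u : List Bool, u.length < d →
        max (lab (b :: (u ++ [false]))) (lab (b :: (u ++ [true]))) ≤ lab (b :: u) := by
      intro b u hu
      have := hmax (b :: u) (by simp; omega)
      simpa [List.cons_append] using this
    have hminc : ∀ b : Bool, ∀ u : List Bool, u.length < d → 0 ≤ lab (b :: u) →
        min (lab (b :: (u ++ [false]))) (lab (b :: (u ++ [true]))) < lab (b :: u) := by
      intro b u hu h0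
      have := hmin (b :: u) (by simp; omega) h0
      simpa [List.cons_append] using this
    have child : ∀ (b : Bool) (m : ℕ), lab [b] ≤ (m : ℤ) →
        Nat.card {w : Fin d → Bool // 0 ≤ lab (b :: List.ofFn w)} ≤ phi d m := by
      intro b m hb
      exact ih m (fun l => lab (b :: l)) (hmaxc b) (hminc b) hb
    have child_empty : ∀ b : Bool, lab [b] < 0 →
        Nat.card {w : Fin d → Bool // 0 ≤ lab (b :: List.ofFn w)} = 0 := by
      intro b hb
      have : IsEmpty {w : Fin d → Bool // 0 ≤ lab (b :: List.ofFn w)} := by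
        constructor
        rintro ⟨w, hw⟩
        have := desc d (fun l => lab (b :: l)) (hmaxc b) (List.ofFn w) (by simp)
        omega
      exact Nat.card_of_isEmpty
    -- split the card
    have card_split : Nat.card {v : Fin (d + 1) → Bool // 0 ≤ lab (List.ofFn v)} =
        Nat.card {w : Fin d → Bool // 0 ≤ lab (false :: List.ofFn w)} +
        Nat.card {w : Fin d → Bool // 0 ≤ lab (true :: List.ofFn w)} := by
      have e1 : {v : Fin (d + 1) → Bool // 0 ≤ lab (List.ofFn v)} ≃
          {p : Bool × (Fin d → Bool) // 0 ≤ lab (p.1 :: List.ofFn p.2)} := by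
        refine (Equiv.subtypeEquiv (Fin.consEquiv (fun _ : Fin (d+1) => Bool)).symm ?_)
        intro v
        rw [List.ofFn_succ]
        rfl
      have e2 : {p : Bool × (Fin d → Bool) // 0 ≤ lab (p.1 :: List.ofFn p.2)} ≃
          Σ b : Bool, {w : Fin d → Bool // 0 ≤ lab (b :: List.ofFn w)} :=
        Equiv.subtypeProdEquivSigmaSubtype (fun b w => 0 ≤ lab (b :: List.ofFn w))
      rw [Nat.card_congr (e1.trans e2)]
      classical
      rw [Nat.card_eq_fintype_card, Fintype.card_sigma, Fintype.sum_bool,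
        Nat.card_eq_fintype_card, Nat.card_eq_fintype_card]
      omega
    rw [card_split]
    rcases lt_or_ge (lab []) 0 with hneg | hpos
    · have hf : lab [false] < 0 := by
        have := hmax [] (Nat.succ_pos d)
        simp at this
        omega
      have ht : lab [true] < 0 := by
        have := hmax [] (Nat.succ_pos d)
        simp at this
        omega
      rw [child_empty false hf, child_empty true ht]
      have := phi_pos (d + 1) k
      omega
    · have hM := hmax [] (Nat.succ_pos d)
      have hm := hmin [] (Nat.succ_pos d) hpos
      simp only [List.nil_append] at hM hm
      have hfk : lab [false] ≤ (k : ℤ) := le_trans (le_trans (le_max_left _ _) hM) hroot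
      have htk : lab [true] ≤ (k : ℤ) := le_trans (le_trans (le_max_right _ _) hM) hroot
      rcases le_total (lab [false]) (lab [true]) with hc | hc
      · -- false is the smaller child : lab [false] < lab []
        have hlt : lab [false] < lab [] := by
          rw [min_eq_left hc] at hm; exact hm
        rcases lt_or_ge (lab [false]) 0 with h0 | h0
        · rw [child_empty false h0]
          have := child true k htk
          have := phi_mono d k
          omega
        · obtain ⟨k', rfl⟩ : ∃ k', k = k' + 1 := by
            have : (1 : ℤ) ≤ k := by omega
            exact ⟨k - 1, by omega⟩
          have h1 : lab [false] ≤ (k' : ℤ) := by push_cast at hroot ⊢; omega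
          have c1 := child false k' h1
          have c2 := child true (k' + 1) htk
          rw [phi_succ]
          omega
      · have hlt : lab [true] < lab [] := by
          rw [min_eq_right hc] at hm; exact hm
        rcases lt_or_ge (lab [true]) 0 with h0 | h0
        · rw [child_empty true h0]
          have := child false k hfk
          have := phi_mono d k
          omega
        · obtain ⟨k', rfl⟩ : ∃ k', k = k' + 1 := by
            have : (1 : ℤ) ≤ k := by omega
            exact ⟨k - 1, by omega⟩
          have h1 : lab [true] ≤ (k' : ℤ) := by push_cast at hroot ⊢; omega
          have c1 := child true k' h1
          have c2 := child false (k' + 1) hfk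
          rw [phi_succ]
          omega

/-- Lemma: in a complete balanced binary tree of depth `n` (vertices are binary
strings of length ≤ n) labeled by integers ≥ -1, such that children's labels
are at most the parent's, and if the parent's label is nonnegative then some
child's label is strictly smaller, and the root's label is at most `k ≥ 0`,
the number of leaves with nonnegative label is at most `phi n k`. -/
theorem integer_labeled_tree_bound (n : ℕ) (k : ℕ) (lab : List Bool → ℤ)
    (hge : ∀ v : List Bool, v.length ≤ n → -1 ≤ lab v)
    (hmax : ∀ u : List Bool, u.length < n →
      max (lab (u ++ [false])) (lab (u ++ [true])) ≤ lab u)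
    (hmin : ∀ u : List Bool, u.length < n → 0 ≤ lab u →
      min (lab (u ++ [false])) (lab (u ++ [true])) < lab u)
    (hroot : lab [] ≤ (k : ℤ)) :
    Nat.card {v : Fin n → Bool // 0 ≤ lab (List.ofFn v)} ≤ phi n k :=
  aux_bound n k lab hmax hmin hroot
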